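/- Let O be a discrete valuation ring with uniformizer π and let m ≥ 1 be a natural number. Let A be a commutative ring equipped with an O/(π^m)-algebra structure such that A is flat as a module over O/(π^m), and let B be a commutative A-algebra that is finitely generated as an A-module and is flat as a module over O/(π^m). If the quotient B/πB is flat as a module over A/πA, then B is flat as a module over A. (This is the ring-theoretic form of the Claim in the proof of Theorem 2.1: a finite morphism of flat O/π^m O-schemes which is flat modulo π is flat.) -/

import Mathlib

universe u v

theorem flat_aux {A : Type u} [CommRing A] {M : Type u} [AddCommGroup M] [Module A M]
    (t : A) (m : ℕ) (hm : 1 ≤ m) (htm : t ^ m = 0)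
    (H1 : ∀ k, 1 ≤ k → k < m → ∀ x : M, t ^ k • x = 0 → ∃ y, x = t • y)
    (H2 : ∀ (ι : Type u) (_ : Fintype ι) (f : ι → A) (x : ι → M),
        (∃ w, ∑ i, f i • x i = t • w) →
      ∃ (κ : Type u) (_ : Fintype κ) (a : ι → κ → A) (y : κ → M) (z : ι → M),
        (∀ i, x i = (∑ j, a i j • y j) + t • z i) ∧
        (∀ j, ∃ c, ∑ i, f i * a i j = t * c)) :
    Module.Flat A M := by
  have P : ∀ k, 1 ≤ k → k ≤ m → ∀ (ι : Type u) (_ : Fintype ι) (f : ι → A) (x : ι → M),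
      (∃ w, ∑ i, f i • x i = t ^ k • w) →
      ∃ (κ : Type u) (_ : Fintype κ) (a : ι → κ → A) (y : κ → M) (z : ι → M),
        (∀ i, x i = (∑ j, a i j • y j) + t ^ k • z i) ∧
        (∀ j, ∃ c, ∑ i, f i * a i j = t ^ k * c) := by
    intro k hk1
    induction k, hk1 using Nat.le_induction with
    | base =>
      intro _ ι inst f x hrel
      simpa only [pow_one] using H2 ι inst f x (by simpa only [pow_one] using hrel)
    | succ k hk ih =>
      intro hk1m ι inst f x hrel
      obtain ⟨w, hw⟩ := hrel
      obtain ⟨κ, instκ, a, y, z, hx, hfa⟩ :=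
        ih (by omega) ι inst f x ⟨t • w, by rw [hw, pow_succ, mul_smul]⟩
      choose g hg using hfa
      have hx' : ∀ i, f i • x i = (∑ j, (f i * a i j) • y j) + t ^ k • (f i • z i) := by
        intro i
        rw [hx i, smul_add, Finset.smul_sum, smul_comm (f i) (t ^ k)]
        simp only [smul_smul]
      have hsum : ∑ i, f i • x i = t ^ k • ((∑ j, g j • y j) + ∑ i, f i • z i) := by
        calc ∑ i, f i • x i
            = ∑ i, ((∑ j, (f i * a i j) • y j) + t ^ k • (f i • z i)) :=
              Finset.sum_congr rfl fun i _ => hx' i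
          _ = (∑ j, (∑ i, f i * a i j) • y j) + t ^ k • ∑ i, f i • z i := by
              rw [Finset.sum_add_distrib]
              congr 1
              · rw [Finset.sum_comm]
                exact Finset.sum_congr rfl fun j _ => (Finset.sum_smul).symm
              · exact (Finset.smul_sum).symm
          _ = (∑ j, t ^ k • (g j • y j)) + t ^ k • ∑ i, f i • z i := by
              refine congrArg₂ _ (Finset.sum_congr rfl fun j _ => ?_) rfl
              rw [hg j, mul_smul]
          _ = t ^ k • ((∑ j, g j • y j) + ∑ i, f i • z i) := by
              rw [smul_add, Finset.smul_sum, Finset.smul_sum]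
      set W : M := (∑ j, g j • y j) + ∑ i, f i • z i with hW
      have hker : t ^ k • (W - t • w) = 0 := by
        rw [smul_sub, ← hsum, hw, pow_succ, mul_smul, sub_self]
      obtain ⟨v, hv⟩ := H1 k hk (by omega) _ hker
      have hWv : W = t • (v + w) := by
        rw [smul_add, ← hv, sub_add_cancel]
      obtain ⟨κ', instκ', b, w', u, hzy, hfb⟩ :=
        H2 (ι ⊕ κ) inferInstance (Sum.elim f g) (Sum.elim z y)
          ⟨v + w, by
            rw [Fintype.sum_sum_type]
            simp only [Sum.elim_inl, Sum.elim_inr]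
            rw [← hWv, hW, add_comm]⟩
      choose d hd using hfb
      refine ⟨κ' ⊕ κ, inferInstance,
        fun i => Sum.elim
          (fun l => (∑ j, a i j * b (Sum.inr j) l) + t ^ k * b (Sum.inl i) l)
          (fun j => a i j * t),
        Sum.elim w' (fun j => u (Sum.inr j)),
        fun i => u (Sum.inl i), ?_, ?_⟩
      · intro i
        have hz : z i = ∑ l, b (Sum.inl i) l • w' l + t • u (Sum.inl i) := by
          simpa using hzy (Sum.inl i)
        have hy : ∀ j, y j = ∑ l, b (Sum.inr j) l • w' l + t • u (Sum.inr j) := fun j => by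
          simpa using hzy (Sum.inr j)
        rw [Fintype.sum_sum_type]
        simp only [Sum.elim_inl, Sum.elim_inr]
        rw [hx i, hz]
        simp only [hy]
        simp only [smul_add, Finset.smul_sum, smul_smul, add_smul, Finset.sum_smul,
          Finset.sum_add_distrib, pow_succ]
        rw [Finset.sum_comm]
        abel
      · intro s
        rcases s with l | j
        · refine ⟨d l, ?_⟩
          simp only [Sum.elim_inl]
          have expand : ∀ i, f i * ((∑ j, a i j * b (Sum.inr j) l) + t ^ k * b (Sum.inl i) l)
              = (∑ j, (f i * a i j) * b (Sum.inr j) l) + t ^ k * (f i * b (Sum.inl i) l) := by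
            intro i
            rw [mul_add, Finset.mul_sum]
            ring_nf
          rw [Finset.sum_congr rfl fun i _ => expand i, Finset.sum_add_distrib,
            Finset.sum_comm]
          have h1 : ∀ j, ∑ i, (f i * a i j) * b (Sum.inr j) l
              = t ^ k * (g j * b (Sum.inr j) l) := by
            intro j
            rw [← Finset.sum_mul, hg j, mul_assoc]
          rw [Finset.sum_congr rfl fun j _ => h1 j, ← Finset.mul_sum, ← Finset.mul_sum,
            ← mul_add, pow_succ, mul_assoc]
          congr 1
          have := hd l
          rw [Fintype.sum_sum_type] at this
          simp only [Sum.elim_inl, Sum.elim_inr] at this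
          rw [← this, add_comm]
        · refine ⟨g j, ?_⟩
          simp only [Sum.elim_inr]
          have : ∀ i, f i * (a i j * t) = (f i * a i j) * t := fun i => by ring
          rw [Finset.sum_congr rfl fun i _ => this i, ← Finset.sum_mul, hg j, pow_succ]
          ring
  refine Module.Flat.of_forall_isTrivialRelation fun {l} {f} {x} hfx => ?_
  obtain ⟨κ, instκ, a, y, z, hx, hfa⟩ :=
    P m hm le_rfl (ULift.{u} (Fin l)) inferInstance (fun i => f i.down) (fun i => x i.down)
      ⟨0, by rw [smul_zero, ← hfx]; exact (Equiv.ulift : ULift.{u} (Fin l) ≃ Fin l).sum_comp (fun i => f i • x i)⟩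
  let eκ := Fintype.equivFin κ
  refine ⟨Fintype.card κ, fun i j => a ⟨i⟩ (eκ.symm j), fun j => y (eκ.symm j), fun i => ?_, fun j => ?_⟩
  · rw [hx ⟨i⟩, htm, zero_smul, add_zero]
    exact (eκ.symm.sum_comp (fun j => a ⟨i⟩ j • y j)).symm
  · obtain ⟨c, hc⟩ := hfa (eκ.symm j)
    have h := (Equiv.ulift : ULift.{u} (Fin l) ≃ Fin l).sum_comp (fun i => f i * a ⟨i⟩ (eκ.symm j))
    rw [← h]
    exact hc.trans (by rw [htm, zero_mul])

theorem trivialize_of_flat {Abar : Type u} [CommRing Abar] {N : Type v} [AddCommGroup N]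
    [Module Abar N] (hsmall : Small.{u} N) [Module.Flat Abar N]
    (ι : Type u) [Fintype ι] (f : ι → Abar) (x : ι → N) (hrel : ∑ i, f i • x i = 0) :
    ∃ (κ : Type u) (_ : Fintype κ) (a : ι → κ → Abar) (y : κ → N),
      (∀ i, x i = ∑ j, a i j • y j) ∧ ∀ j, ∑ i, f i * a i j = 0 := by
  haveI := hsmall
  let e : Shrink.{u} N ≃ₗ[Abar] N := Shrink.linearEquiv Abar N
  have hrel' : ∑ i, f i • e.symm (x i) = 0 := by
    apply e.injective
    rw [map_sum, map_zero]
    simpa only [map_smul, e.apply_symm_apply] using hrel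
  obtain ⟨k, a, y, hx, hfa⟩ :=
    Module.Flat.isTrivialRelation_of_sum_smul_eq_zero (R := Abar) (M := Shrink.{u} N) hrel'
  refine ⟨ULift.{u} (Fin k), inferInstance, fun i j => a i j.down, fun j => e (y j.down),
    fun i => ?_, fun j => hfa j.down⟩
  have := congrArg e (hx i)
  rw [e.apply_symm_apply, map_sum, ← (Equiv.ulift : ULift.{u} (Fin k) ≃ Fin k).sum_comp] at this
  simpa only [map_smul, Equiv.ulift_apply] using this

theorem flat_main_aux {A : Type u} [CommRing A] {M : Type v} [AddCommGroup M] [Module A M]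
    (hsmall : Small.{u} M)
    (t : A) (m : ℕ) (hm : 1 ≤ m) (htm : t ^ m = 0)
    (H1 : ∀ k, 1 ≤ k → k < m → ∀ x : M, t ^ k • x = 0 → ∃ y, x = t • y)
    (H2 : ∀ (ι : Type u) (_ : Fintype ι) (f : ι → A) (x : ι → M),
        (∃ w, ∑ i, f i • x i = t • w) →
      ∃ (κ : Type u) (_ : Fintype κ) (a : ι → κ → A) (y : κ → M) (z : ι → M),
        (∀ i, x i = (∑ j, a i j • y j) + t • z i) ∧
        (∀ j, ∃ c, ∑ i, f i * a i j = t * c)) :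
    Module.Flat A M := by
  haveI := hsmall
  let e : Shrink.{u} M ≃ₗ[A] M := Shrink.linearEquiv A M
  have flatS : Module.Flat A (Shrink.{u} M) := by
    refine flat_aux t m hm htm ?_ ?_
    · intro k hk1 hkm x hx
      obtain ⟨y, hy⟩ := H1 k hk1 hkm (e x) (by rw [← map_smul, hx, map_zero])
      exact ⟨e.symm y, by apply e.injective; rw [map_smul, e.apply_symm_apply, hy]⟩
    · intro ι instι f x hrel
      obtain ⟨w, hw⟩ := hrel
      obtain ⟨κ, instκ, a, y, z, hx, hfa⟩ := H2 ι instι f (fun i => e (x i))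
        ⟨e w, by rw [← map_smul, ← hw, map_sum]; exact Finset.sum_congr rfl fun i _ => (map_smul e _ _).symm⟩
      refine ⟨κ, instκ, a, fun j => e.symm (y j), fun i => e.symm (z i), fun i => ?_, hfa⟩
      apply e.injective
      rw [map_add, map_smul, map_sum, e.apply_symm_apply, hx i]
      congr 1
      exact Finset.sum_congr rfl fun j _ => by rw [map_smul, e.apply_symm_apply]
  exact Module.Flat.of_shrink.{u}

theorem quot_dvr_aux {O : Type*} [CommRing O] [IsDomain O]
    (π : O) (hπ0 : π ≠ 0) (m k : ℕ) (hk : k ≤ m)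
    (y : O ⧸ Ideal.span {π ^ m})
    (hy : (Ideal.Quotient.mk (Ideal.span {π ^ m}) π) ^ k * y = 0) :
    ∃ c, y = (Ideal.Quotient.mk (Ideal.span {π ^ m}) π) ^ (m - k) * c := by
  obtain ⟨α, rfl⟩ := Ideal.Quotient.mk_surjective y
  rw [← map_pow, ← map_mul, Ideal.Quotient.eq_zero_iff_mem, Ideal.mem_span_singleton] at hy
  obtain ⟨c, hc⟩ := hy
  refine ⟨Ideal.Quotient.mk _ c, ?_⟩
  rw [← map_pow, ← map_mul, Ideal.Quotient.eq, Ideal.mem_span_singleton]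
  have : π ^ m = π ^ k * π ^ (m - k) := by rw [← pow_add, Nat.add_sub_cancel' hk]
  have hα : π ^ k * α = π ^ k * (π ^ (m - k) * c) := by
    rw [hc, this]; ring
  have := mul_left_cancel₀ (pow_ne_zero k hπ0) hα
  exact ⟨0, by rw [this, mul_zero, sub_self]⟩

open TensorProduct in
theorem smul_ker_of_flat {R : Type u} [CommRing R] {B : Type v} [AddCommGroup B] [Module R B]
    [Module.Flat R B] (r s : R)
    (hexact : ∀ y : R, r * y = 0 ↔ ∃ c, s * c = y)
    (x : B) (hx : r • x = 0) : ∃ y : B, x = s • y := by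
  have hex : Function.Exact (LinearMap.lsmul R R s) (LinearMap.lsmul R R r) := by
    intro y
    simp only [LinearMap.lsmul_apply, smul_eq_mul, Set.mem_range]
    exact hexact y
  have hTex := Module.Flat.lTensor_exact B hex
  have h0 : LinearMap.lTensor B (LinearMap.lsmul R R r) (x ⊗ₜ[R] (1 : R)) = 0 := by
    rw [LinearMap.lTensor_tmul]
    simp only [LinearMap.lsmul_apply, smul_eq_mul, mul_one]
    calc x ⊗ₜ[R] r = x ⊗ₜ[R] (r • (1 : R)) := by rw [smul_eq_mul, mul_one]
      _ = (r • x) ⊗ₜ[R] (1 : R) := (TensorProduct.smul_tmul r x 1).symm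
      _ = 0 := by rw [hx, TensorProduct.zero_tmul]
  obtain ⟨ζ, hζ⟩ := (hTex _).mp h0
  have hs : ∀ ζ : B ⊗[R] R, (TensorProduct.rid R B) (LinearMap.lTensor B (LinearMap.lsmul R R s) ζ)
      = s • (TensorProduct.rid R B) ζ := by
    intro ζ
    induction ζ using TensorProduct.induction_on with
    | zero => simp
    | tmul b c =>
        rw [LinearMap.lTensor_tmul]
        simp only [LinearMap.lsmul_apply, smul_eq_mul, TensorProduct.rid_tmul, smul_smul]
    | add ζ₁ ζ₂ h1 h2 => rw [map_add, map_add, map_add, h1, h2, smul_add]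
  exact ⟨(TensorProduct.rid R B) ζ, by
    have hx1 : (TensorProduct.rid R B) (x ⊗ₜ[R] (1 : R)) = x := by
      rw [TensorProduct.rid_tmul, one_smul]
    rw [← hx1, ← hζ, hs]⟩

theorem exists_smul_of_mem_span_singleton_smul_top {A : Type u} [CommRing A] {B : Type v}
    [AddCommGroup B] [Module A B] (t : A) (x : B)
    (hx : x ∈ (Ideal.span {t} • ⊤ : Submodule A B)) : ∃ z, t • z = x := by
  refine Submodule.smul_induction_on hx ?_ ?_
  · intro r hr n _
    rw [Ideal.mem_span_singleton] at hr
    obtain ⟨c, rfl⟩ := hr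
    exact ⟨c • n, by rw [← mul_smul]⟩
  · rintro x y ⟨z1, rfl⟩ ⟨z2, rfl⟩
    exact ⟨z1 + z2, by rw [smul_add]⟩

/-- **Claim in the proof of Theorem 2.1 (ring-theoretic form).**
Let `O` be a discrete valuation ring with uniformizer `π` and `m ≥ 1`. Let `A` be a
commutative `O/(π^m)`-algebra, flat as an `O/(π^m)`-module, and `B` a commutative
`A`-algebra, finitely generated as an `A`-module and flat as an `O/(π^m)`-module.
If `B/πB` is flat over `A/πA`, then `B` is flat over `A`. -/
theorem flat_of_finite_of_flat_mod_pi
    (O : Type*) [CommRing O] [IsDomain O] [IsDiscreteValuationRing O]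
    (π : O) (hπ : Irreducible π) (m : ℕ) (hm : 1 ≤ m)
    (A : Type*) [CommRing A] [Algebra (O ⧸ Ideal.span {π ^ m}) A]
    [Module.Flat (O ⧸ Ideal.span {π ^ m}) A]
    (B : Type*) [CommRing B] [Algebra A B] [Module.Finite A B]
    [Algebra (O ⧸ Ideal.span {π ^ m}) B]
    [IsScalarTower (O ⧸ Ideal.span {π ^ m}) A B]
    [Module.Flat (O ⧸ Ideal.span {π ^ m}) B]
    (hbar : Module.Flat
      (A ⧸ Ideal.span {algebraMap (O ⧸ Ideal.span {π ^ m}) A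
          (Ideal.Quotient.mk (Ideal.span {π ^ m}) π)})
      (B ⧸ (Ideal.span {algebraMap (O ⧸ Ideal.span {π ^ m}) A
          (Ideal.Quotient.mk (Ideal.span {π ^ m}) π)} • ⊤ : Submodule A B))) :
    Module.Flat A B := by
  classical
  obtain ⟨n0, φ0, hφ0⟩ := Module.Finite.exists_fin' A B
  set mkπ : O ⧸ Ideal.span {π ^ m} := Ideal.Quotient.mk (Ideal.span {π ^ m}) π with hmkπ
  set t : A := algebraMap (O ⧸ Ideal.span {π ^ m}) A mkπ with ht
  set I : Ideal A := Ideal.span {t} with hI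
  -- basic facts
  have hπm : mkπ ^ m = (0 : O ⧸ Ideal.span {π ^ m}) := by
    rw [hmkπ, ← map_pow, Ideal.Quotient.eq_zero_iff_mem]
    exact Ideal.mem_span_singleton_self _
  have htm : t ^ m = 0 := by rw [ht, ← map_pow, hπm, map_zero]
  -- H1
  have H1 : ∀ k, 1 ≤ k → k < m → ∀ x : B, t ^ k • x = 0 → ∃ y, x = t • y := by
    intro k hk1 hkm x hx
    have hsmul : ∀ (r : O ⧸ Ideal.span {π ^ m}) (b : B),
        (algebraMap (O ⧸ Ideal.span {π ^ m}) A r) • b = r • b := fun r b =>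
      algebraMap_smul A r b
    have hx' : (mkπ ^ k) • x = 0 := by
      rw [← hsmul (mkπ ^ k) x, map_pow, ← ht, hx]
    have hexact : ∀ y : O ⧸ Ideal.span {π ^ m},
        mkπ ^ k * y = 0 ↔ ∃ c, mkπ ^ (m - k) * c = y := by
      intro y
      constructor
      · intro h
        obtain ⟨c, hc⟩ := quot_dvr_aux π hπ.ne_zero m k (le_of_lt hkm) y h
        exact ⟨c, hc.symm⟩
      · rintro ⟨c, rfl⟩
        rw [← mul_assoc, ← pow_add, Nat.add_sub_cancel' (le_of_lt hkm), hπm, zero_mul]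
    obtain ⟨y, hy⟩ := smul_ker_of_flat (mkπ ^ k) (mkπ ^ (m - k)) hexact x hx'
    have hmk : m - k = (m - k - 1) + 1 := by omega
    have hpow : mkπ ^ (m - k) = mkπ * mkπ ^ (m - k - 1) := by
      conv_lhs => rw [hmk]
      rw [pow_succ, mul_comm]
    refine ⟨(mkπ ^ (m - k - 1)) • y, ?_⟩
    rw [hy, hpow, mul_smul, ← hsmul mkπ, ← ht]
  -- H2
  have H2 : ∀ (ι : Type u_2) (_ : Fintype ι) (f : ι → A) (x : ι → B),
      (∃ w, ∑ i, f i • x i = t • w) →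
      ∃ (κ : Type u_2) (_ : Fintype κ) (a : ι → κ → A) (y : κ → B) (z : ι → B),
        (∀ i, x i = (∑ j, a i j • y j) + t • z i) ∧
        (∀ j, ∃ c, ∑ i, f i * a i j = t * c) := by
    intro ι instι f x hrel
    obtain ⟨w, hw⟩ := hrel
    haveI hbar' : Module.Flat (A ⧸ I) (B ⧸ (I • ⊤ : Submodule A B)) := hbar
    have hqsurj : Function.Surjective
        (Submodule.Quotient.mk (p := (I • ⊤ : Submodule A B))) :=
      Submodule.Quotient.mk_surjective _
    have hq : ∀ (a₀ : A) (b : B), (Ideal.Quotient.mk I a₀) •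
        (Submodule.Quotient.mk (p := (I • ⊤ : Submodule A B)) b)
        = Submodule.Quotient.mk (a₀ • b) := fun _ _ => rfl
    have ht0 : Ideal.Quotient.mk I t = 0 := by
      rw [Ideal.Quotient.eq_zero_iff_mem]
      exact Ideal.mem_span_singleton_self _
    have mk_sum : ∀ {ι' : Type u_2} [Fintype ι'] (g : ι' → B),
        Submodule.Quotient.mk (p := (I • ⊤ : Submodule A B)) (∑ i, g i)
        = ∑ i, Submodule.Quotient.mk (p := (I • ⊤ : Submodule A B)) (g i) := by
      intro ι' _ g
      exact map_sum (Submodule.mkQ (I • ⊤ : Submodule A B)) g Finset.univ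
    have hrel0 : ∑ i, (Ideal.Quotient.mk I (f i)) •
        (Submodule.Quotient.mk (p := (I • ⊤ : Submodule A B)) (x i)) = 0 := by
      rw [Finset.sum_congr rfl fun i _ => hq (f i) (x i)]
      rw [← mk_sum, hw, ← hq t w, ht0, zero_smul]
    obtain ⟨κ, instκ, abar, ybar, hxbar, hfabar⟩ :=
      trivialize_of_flat (small_of_surjective (hqsurj.comp hφ0)) ι
        (fun i => Ideal.Quotient.mk I (f i))
        (fun i => Submodule.Quotient.mk (x i)) hrel0
    choose a ha using fun i j => Ideal.Quotient.mk_surjective (abar i j)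
    choose Y hY using fun j => hqsurj (ybar j)
    have hmem : ∀ i, x i - ∑ j, a i j • Y j ∈ (I • ⊤ : Submodule A B) := by
      intro i
      rw [← Submodule.Quotient.mk_eq_zero]
      have : Submodule.Quotient.mk (p := (I • ⊤ : Submodule A B)) (x i - ∑ j, a i j • Y j)
          = Submodule.Quotient.mk (x i) - ∑ j, abar i j • ybar j := by
        rw [Submodule.Quotient.mk_sub, mk_sum]
        congr 1
        refine Finset.sum_congr rfl fun j _ => ?_
        rw [← hq (a i j) (Y j), ha i j, hY j]
      rw [this, ← hxbar i, sub_self]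
    have hmem' : ∀ i, ∃ z, t • z = x i - ∑ j, a i j • Y j := by
      intro i
      exact exists_smul_of_mem_span_singleton_smul_top t _ (hmem i)
    choose z hz using hmem'
    refine ⟨κ, instκ, a, Y, z, fun i => ?_, fun j => ?_⟩
    · rw [hz i]; abel
    · have : Ideal.Quotient.mk I (∑ i, f i * a i j) = 0 := by
        rw [map_sum]
        have : ∀ i, Ideal.Quotient.mk I (f i * a i j)
            = (Ideal.Quotient.mk I (f i)) * abar i j := by
          intro i; rw [map_mul, ha i j]
        rw [Finset.sum_congr rfl fun i _ => this i, hfabar j]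
      rw [Ideal.Quotient.eq_zero_iff_mem, hI, Ideal.mem_span_singleton] at this
      obtain ⟨c, hc⟩ := this
      exact ⟨c, hc⟩
  exact flat_main_aux (small_of_surjective hφ0) t m hm htm H1 H2
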